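/- Let μ be a finite measure on [0,1], 0 < q < 1, c > 0, C a positive integer, and let f ∈ L^∞(μ). Suppose (M_j)_{j=0}^{n} and (N_i)_{i=0}^{n} are measurable functions with ‖M_j‖_{L¹(μ)} ≤ C and ‖N_i‖_{L^∞(μ)} ≤ C for all i, j, and suppose that for each t ∈ [0,1], the set {i : N_i(t) ≠ 0} has at most 2C elements. Let (a_{ij}) satisfy |a_{ij}| ≤ c·q^{|i−j|}. Then the function g(t) = ∑_{i,j} a_{ij} ⟨f, M_j⟩_μ N_i(t) satisfies ‖g‖_{L^∞(μ)} ≤ 2C³·c·(1+q)/(1−q) · ‖f‖_{L^∞(μ)}. -/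

import Mathlib

open MeasureTheory

lemma geo_finset_sum_le {q : ℝ} (hq0 : 0 < q) (hq1 : q < 1) (s : Finset ℕ) :
    ∑ k ∈ s, q ^ k ≤ (1 - q)⁻¹ := by
  have hsum : Summable (fun k : ℕ => q ^ k) := summable_geometric_of_lt_one hq0.le hq1
  calc ∑ k ∈ s, q ^ k ≤ ∑' k, q ^ k := Summable.sum_le_tsum s (fun k _ => by positivity) hsum
    _ = (1 - q)⁻¹ := tsum_geometric_of_lt_one hq0.le hq1

lemma natAbs_pow_sum_le {q : ℝ} (hq0 : 0 < q) (hq1 : q < 1) (n : ℕ) (i : Fin (n + 1)) :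
    ∑ j : Fin (n + 1), q ^ (((i : ℤ) - (j : ℤ)).natAbs) ≤ (1 + q) / (1 - q) := by
  have h1q : (0:ℝ) < 1 - q := by linarith
  classical
  rw [← Finset.sum_filter_add_sum_filter_not Finset.univ (fun j : Fin (n+1) => (j:ℕ) ≤ (i:ℕ))]
  have hA : ∑ j ∈ Finset.univ.filter (fun j : Fin (n+1) => (j:ℕ) ≤ (i:ℕ)),
      q ^ (((i : ℤ) - (j : ℤ)).natAbs) ≤ (1 - q)⁻¹ := by
    have heq : ∑ j ∈ Finset.univ.filter (fun j : Fin (n+1) => (j:ℕ) ≤ (i:ℕ)),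
        q ^ (((i : ℤ) - (j : ℤ)).natAbs)
        = ∑ k ∈ (Finset.univ.filter (fun j : Fin (n+1) => (j:ℕ) ≤ (i:ℕ))).image
            (fun j : Fin (n+1) => (i:ℕ) - (j:ℕ)), q ^ k := by
      rw [Finset.sum_image]
      · apply Finset.sum_congr rfl
        intro j hj
        simp only [Finset.mem_filter] at hj
        congr 1
        omega
      · intro x hx y hy hxy
        simp only [Finset.coe_filter, Finset.mem_univ, true_and, Set.mem_setOf_eq] at hx hy hxy
        have : (x:ℕ) = (y:ℕ) := by omega
        exact Fin.ext this
    rw [heq]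
    exact geo_finset_sum_le hq0 hq1 _
  have hB : ∑ j ∈ Finset.univ.filter (fun j : Fin (n+1) => ¬ (j:ℕ) ≤ (i:ℕ)),
      q ^ (((i : ℤ) - (j : ℤ)).natAbs) ≤ q * (1 - q)⁻¹ := by
    have heq : ∑ j ∈ Finset.univ.filter (fun j : Fin (n+1) => ¬ (j:ℕ) ≤ (i:ℕ)),
        q ^ (((i : ℤ) - (j : ℤ)).natAbs)
        = ∑ j ∈ Finset.univ.filter (fun j : Fin (n+1) => ¬ (j:ℕ) ≤ (i:ℕ)),
          q * q ^ ((j:ℕ) - (i:ℕ) - 1) := by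
      apply Finset.sum_congr rfl
      intro j hj
      simp only [Finset.mem_filter] at hj
      have h1 : (((i : ℤ) - (j : ℤ)).natAbs) = (j:ℕ) - (i:ℕ) - 1 + 1 := by omega
      rw [h1, pow_succ]
      ring
    rw [heq, ← Finset.mul_sum]
    have : ∑ j ∈ Finset.univ.filter (fun j : Fin (n+1) => ¬ (j:ℕ) ≤ (i:ℕ)),
        q ^ ((j:ℕ) - (i:ℕ) - 1)
        = ∑ k ∈ (Finset.univ.filter (fun j : Fin (n+1) => ¬ (j:ℕ) ≤ (i:ℕ))).image
            (fun j : Fin (n+1) => (j:ℕ) - (i:ℕ) - 1), q ^ k := by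
      rw [Finset.sum_image]
      intro x hx y hy hxy
      simp only [Finset.coe_filter, Finset.mem_univ, true_and, Set.mem_setOf_eq] at hx hy hxy
      have : (x:ℕ) = (y:ℕ) := by omega
      exact Fin.ext this
    rw [this]
    exact mul_le_mul_of_nonneg_left (geo_finset_sum_le hq0 hq1 _) hq0.le
  have : (1 + q) / (1 - q) = (1 - q)⁻¹ + q * (1 - q)⁻¹ := by
    field_simp
  rw [this]
  exact add_le_add hA hB

theorem stmt14 (μ : Measure ℝ) [IsFiniteMeasure μ]
    (q c : ℝ) (hq0 : 0 < q) (hq1 : q < 1) (hc : 0 < c)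
    (C : ℕ) (hC : 0 < C) (n : ℕ)
    (f : ℝ → ℝ) (hf : eLpNorm f ⊤ μ < ⊤)
    (M N : Fin (n + 1) → ℝ → ℝ)
    (hMmeas : ∀ j, Integrable (M j) μ) (hNmeas : ∀ i, Measurable (N i))
    (hM1 : ∀ j, eLpNorm (M j) 1 μ ≤ ENNReal.ofReal C)
    (hNinf : ∀ i, eLpNorm (N i) ⊤ μ ≤ ENNReal.ofReal C)
    (hNcard : ∀ t : ℝ,
      (Finset.univ.filter (fun i : Fin (n + 1) => N i t ≠ 0)).card ≤ 2 * C)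
    (a : Matrix (Fin (n + 1)) (Fin (n + 1)) ℝ)
    (ha : ∀ i j, |a i j| ≤ c * q ^ ((i : ℤ) - (j : ℤ)).natAbs) :
    eLpNorm (fun t => ∑ i, ∑ j, a i j * (∫ x, f x * M j x ∂μ) * N i t) ⊤ μ ≤
      ENNReal.ofReal (2 * (C : ℝ) ^ 3 * c * (1 + q) / (1 - q)) *
        eLpNorm f ⊤ μ := by
  classical
  have h1q : (0:ℝ) < 1 - q := by linarith
  set F : ℝ := (eLpNorm f ⊤ μ).toReal with hFdef
  have hFnn : 0 ≤ F := ENNReal.toReal_nonneg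
  have hCnn : (0:ℝ) ≤ (C:ℝ) := Nat.cast_nonneg C
  -- a.e. bound on f
  have hfae : ∀ᵐ x ∂μ, |f x| ≤ F := by
    have h := ae_le_eLpNormEssSup (f := f) (μ := μ)
    filter_upwards [h] with x hx
    have hx2 : (‖f x‖₊ : ENNReal) ≤ eLpNorm f ⊤ μ := by
      rwa [eLpNorm_exponent_top]
    have := ENNReal.toReal_mono hf.ne hx2
    simpa [Real.norm_eq_abs, hFdef] using this
  -- integral of |M j| bound
  have hMint : ∀ j, ∫ x, |M j x| ∂μ ≤ (C:ℝ) := by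
    intro j
    have h1 : ∫ x, |M j x| ∂μ = (eLpNorm (M j) 1 μ).toReal := by
      rw [eLpNorm_one_eq_lintegral_enorm,
        ← integral_norm_eq_lintegral_enorm (hMmeas j).aestronglyMeasurable]
      simp [Real.norm_eq_abs]
    rw [h1]
    have := ENNReal.toReal_mono (ENNReal.ofReal_ne_top) (hM1 j)
    rwa [ENNReal.toReal_ofReal hCnn] at this
  -- bound on the inner integrals
  have hI : ∀ j, |∫ x, f x * M j x ∂μ| ≤ (C:ℝ) * F := by
    intro j
    by_cases hint : Integrable (fun x => f x * M j x) μ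
    · calc |∫ x, f x * M j x ∂μ| ≤ ∫ x, |f x * M j x| ∂μ := by
            have := norm_integral_le_integral_norm (fun x => f x * M j x) (μ := μ)
            simp only [Real.norm_eq_abs] at this
            exact this
        _ ≤ ∫ x, F * |M j x| ∂μ := by
            apply integral_mono_ae hint.abs (((hMmeas j).abs).const_mul F)
            filter_upwards [hfae] with x hx
            rw [abs_mul]
            exact mul_le_mul_of_nonneg_right hx (abs_nonneg _)
        _ = F * ∫ x, |M j x| ∂μ := integral_const_mul F _
        _ ≤ F * (C:ℝ) := mul_le_mul_of_nonneg_left (hMint j) hFnn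
        _ = (C:ℝ) * F := mul_comm _ _
    · rw [integral_undef hint]
      simp only [abs_zero]
      positivity
  -- row sums of a
  have hK : ∀ i : Fin (n+1), ∑ j, |a i j| ≤ c * ((1 + q) / (1 - q)) := by
    intro i
    calc ∑ j, |a i j| ≤ ∑ j : Fin (n+1), c * q ^ (((i : ℤ) - (j : ℤ)).natAbs) :=
          Finset.sum_le_sum fun j _ => ha i j
      _ = c * ∑ j : Fin (n+1), q ^ (((i : ℤ) - (j : ℤ)).natAbs) := by
          rw [Finset.mul_sum]
      _ ≤ c * ((1 + q) / (1 - q)) :=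
          mul_le_mul_of_nonneg_left (natAbs_pow_sum_le hq0 hq1 n i) hc.le
  -- a.e. bound on N
  have hNae : ∀ᵐ t ∂μ, ∀ i, |N i t| ≤ (C:ℝ) := by
    rw [ae_all_iff]
    intro i
    have h := ae_le_eLpNormEssSup (f := N i) (μ := μ)
    filter_upwards [h] with t ht
    have ht2 : (‖N i t‖₊ : ENNReal) ≤ ENNReal.ofReal C := by
      refine ht.trans ?_
      rw [← eLpNorm_exponent_top]
      exact hNinf i
    have := ENNReal.toReal_mono ENNReal.ofReal_ne_top ht2
    rw [ENNReal.toReal_ofReal hCnn] at this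
    simpa [Real.norm_eq_abs] using this
  set K : ℝ := 2 * (C:ℝ) ^ 3 * c * (1 + q) / (1 - q) with hKdef
  have hKnn : 0 ≤ K := by positivity
  -- pointwise a.e. bound on g
  have hg : ∀ᵐ t ∂μ, ‖∑ i, ∑ j, a i j * (∫ x, f x * M j x ∂μ) * N i t‖ ≤ K * F := by
    filter_upwards [hNae] with t hNt
    rw [Real.norm_eq_abs]
    set S := Finset.univ.filter (fun i : Fin (n + 1) => N i t ≠ 0) with hSdef
    have hzero : ∀ i ∈ Finset.univ, i ∉ S →
        (∑ j, a i j * (∫ x, f x * M j x ∂μ) * N i t) = 0 := by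
      intro i _ hi
      have : N i t = 0 := by
        by_contra h
        exact hi (Finset.mem_filter.mpr ⟨Finset.mem_univ i, h⟩)
      simp [this]
    calc |∑ i, ∑ j, a i j * (∫ x, f x * M j x ∂μ) * N i t|
        = |∑ i ∈ S, ∑ j, a i j * (∫ x, f x * M j x ∂μ) * N i t| := by
          rw [Finset.sum_subset (Finset.subset_univ S) hzero]
      _ ≤ ∑ i ∈ S, |∑ j, a i j * (∫ x, f x * M j x ∂μ) * N i t| :=
          Finset.abs_sum_le_sum_abs _ _
      _ ≤ ∑ i ∈ S, (c * ((1 + q) / (1 - q)) * ((C:ℝ) * F) * (C:ℝ)) := by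
          apply Finset.sum_le_sum
          intro i _
          calc |∑ j, a i j * (∫ x, f x * M j x ∂μ) * N i t|
              ≤ ∑ j, |a i j * (∫ x, f x * M j x ∂μ) * N i t| :=
                Finset.abs_sum_le_sum_abs _ _
            _ ≤ ∑ j, |a i j| * ((C:ℝ) * F) * (C:ℝ) := by
                apply Finset.sum_le_sum
                intro j _
                rw [abs_mul, abs_mul]
                have h1 : |a i j| * |∫ x, f x * M j x ∂μ| ≤ |a i j| * ((C:ℝ) * F) :=
                  mul_le_mul_of_nonneg_left (hI j) (abs_nonneg _)
                have h2 : |a i j| * |∫ x, f x * M j x ∂μ| * |N i t| ≤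
                    |a i j| * ((C:ℝ) * F) * |N i t| :=
                  mul_le_mul_of_nonneg_right h1 (abs_nonneg _)
                refine h2.trans ?_
                exact mul_le_mul_of_nonneg_left (hNt i) (by positivity)
            _ = (∑ j, |a i j|) * ((C:ℝ) * F) * (C:ℝ) := by
                rw [← Finset.sum_mul, ← Finset.sum_mul]
            _ ≤ c * ((1 + q) / (1 - q)) * ((C:ℝ) * F) * (C:ℝ) := by
                have := hK i
                gcongr
      _ = (S.card : ℝ) * (c * ((1 + q) / (1 - q)) * ((C:ℝ) * F) * (C:ℝ)) := by
          rw [Finset.sum_const, nsmul_eq_mul]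
      _ ≤ (2 * C : ℕ) * (c * ((1 + q) / (1 - q)) * ((C:ℝ) * F) * (C:ℝ)) := by
          have hcard : (S.card : ℝ) ≤ ((2 * C : ℕ) : ℝ) := by
            exact_mod_cast hNcard t
          exact mul_le_mul_of_nonneg_right hcard (by positivity)
      _ = K * F := by
          push_cast
          rw [hKdef]
          field_simp
  -- conclude
  calc eLpNorm (fun t => ∑ i, ∑ j, a i j * (∫ x, f x * M j x ∂μ) * N i t) ⊤ μ
      ≤ ENNReal.ofReal (K * F) := by
        rw [eLpNorm_exponent_top]
        exact eLpNormEssSup_le_of_ae_bound hg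
    _ = ENNReal.ofReal K * ENNReal.ofReal F := ENNReal.ofReal_mul hKnn
    _ = ENNReal.ofReal K * eLpNorm f ⊤ μ := by
        rw [hFdef, ENNReal.ofReal_toReal hf.ne]
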